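/- Let G be a finite solvable group, N a normal subgroup of G with G/N nontrivial. Write bars for images in G/N. Then the following are equivalent: (i) the image of S(G) in G/N is nontrivial; (ii) the Fitting height of G/N equals the Fitting height of G; (iii) S(G/N) equals the image of S(G) in G/N. -/

import Mathlib

/-- `FittingHeightLe n G` says the group `G` has a normal series of length at most `n`
with nilpotent quotients, i.e. Fitting height at most `n`. -/
def FittingHeightLe : ℕ → ∀ (G : Type) [Group G], Prop
  | 0, G, _ => Subsingleton G
  | (n+1), G, _ => ∃ (N : Subgroup G) (hN : N.Normal), Group.IsNilpotent N ∧
      (letI := hN; FittingHeightLe n (G ⧸ N))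

/-- The Fitting height of a group (junk value if no bound exists). -/
noncomputable def fittingHeight (G : Type) [Group G] : ℕ :=
  sInf {n | FittingHeightLe n G}

open QuotientGroup Subgroup
open scoped commutatorElement

theorem fhle_of_surjective : ∀ (n : ℕ) {G G' : Type} [Group G] [Group G'] (f : G →* G'),
    Function.Surjective f → FittingHeightLe n G → FittingHeightLe n G'
  | 0, G, G', _, _, f, hf, h => by
      exact ⟨fun a b => by
        obtain ⟨x, rfl⟩ := hf a; obtain ⟨y, rfl⟩ := hf b
        rw [h.elim x y]⟩
  | (n+1), G, G', _, _, f, hf, ⟨M, hM, hnil, hq⟩ => by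
      haveI hMf : (M.map f).Normal := hM.map f hf
      refine ⟨M.map f, hMf, ?_, ?_⟩
      · exact @nilpotent_of_surjective _ _ _ _ hnil (f.subgroupMap M)
          (f.subgroupMap_surjective M)
      · refine fhle_of_surjective n
          (QuotientGroup.map M (M.map f) f (fun x hx => Subgroup.mem_comap.mpr ⟨x, hx, rfl⟩)) ?_ hq
        intro y
        obtain ⟨z, rfl⟩ := QuotientGroup.mk_surjective y
        obtain ⟨x, rfl⟩ := hf z
        exact ⟨QuotientGroup.mk x, QuotientGroup.map_mk _ _ _ _ _⟩

theorem fhle_of_injective : ∀ (n : ℕ) {G G' : Type} [Group G] [Group G'] (f : G →* G'),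
    Function.Injective f → FittingHeightLe n G' → FittingHeightLe n G
  | 0, G, G', _, _, f, hf, h => ⟨fun a b => hf (h.elim (f a) (f b))⟩
  | (n+1), G, G', _, _, f, hf, ⟨M', hM', hnil', hq'⟩ => by
      refine ⟨M'.comap f, hM'.comap f, ?_, ?_⟩
      · haveI : Group.IsNilpotent M' := hnil'
        haveI : Group.IsNilpotent (((M'.comap f).map f).subgroupOf M') := inferInstance
        have e1 : ((M'.comap f).map f).subgroupOf M' ≃* (M'.comap f).map f :=
          Subgroup.subgroupOfEquivOfLe (map_comap_le f M')
        have e2 : (M'.comap f).map f ≃* M'.comap f :=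
          ((M'.comap f).equivMapOfInjective f hf).symm
        exact nilpotent_of_mulEquiv (e1.trans e2)
      · refine fhle_of_injective n
          (QuotientGroup.map (M'.comap f) M' f le_rfl) ?_ hq'
        refine (QuotientGroup.map (M'.comap f) M' f le_rfl).ker_eq_bot_iff.mp ?_
        rw [eq_bot_iff]
        intro x hx
        obtain ⟨g, rfl⟩ := QuotientGroup.mk_surjective x
        rw [MonoidHom.mem_ker, QuotientGroup.map_mk, QuotientGroup.eq_one_iff] at hx
        rw [Subgroup.mem_bot, QuotientGroup.eq_one_iff]
        exact hx

theorem fhle_of_mulEquiv {G G' : Type} [Group G] [Group G'] (e : G ≃* G') {n : ℕ}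
    (h : FittingHeightLe n G) : FittingHeightLe n G' :=
  fhle_of_surjective n e.toMonoidHom e.surjective h

theorem fhle_succ_self {G : Type} [Group G] {n : ℕ} (h : FittingHeightLe n G) :
    FittingHeightLe (n+1) G := by
  refine ⟨⊥, inferInstance, ?_, ?_⟩
  · haveI : Subsingleton ((⊥ : Subgroup G) : Type) :=
      ⟨fun a b => Subtype.ext ((Subgroup.mem_bot.mp a.2).trans (Subgroup.mem_bot.mp b.2).symm)⟩
    infer_instance
  · exact fhle_of_mulEquiv (QuotientGroup.quotientBot (G := G)).symm h

theorem fhle_mono {G : Type} [Group G] {n m : ℕ} (hnm : n ≤ m) (h : FittingHeightLe n G) :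
    FittingHeightLe m G := by
  induction m, hnm using Nat.le_induction with
  | base => exact h
  | succ m hm ih => exact fhle_succ_self ih

theorem fhle_prod :
    ∀ (n : ℕ) {G G' : Type} [Group G] [Group G'],
    FittingHeightLe n G → FittingHeightLe n G' → FittingHeightLe n (G × G')
  | 0, G, G', _, _, h, h' => by
      haveI : Subsingleton G := h
      haveI : Subsingleton G' := h'
      exact (inferInstance : Subsingleton (G × G'))
  | (n+1), G, G', _, _, ⟨M, hM, hnil, hq⟩, ⟨M', hM', hnil', hq'⟩ => by
      have hker : ((QuotientGroup.mk' M).prodMap (QuotientGroup.mk' M')).ker = M.prod M' := by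
        rw [MonoidHom.ker_prodMap, QuotientGroup.ker_mk', QuotientGroup.ker_mk']
      haveI : ((M.prod M') : Subgroup (G × G')).Normal := by
        rw [← hker]; infer_instance
      refine ⟨M.prod M', inferInstance, ?_, ?_⟩
      · haveI : Group.IsNilpotent M := hnil
        haveI : Group.IsNilpotent M' := hnil'
        exact nilpotent_of_mulEquiv (Subgroup.prodEquiv M M').symm
      · have hsurj : Function.Surjective ((QuotientGroup.mk' M).prodMap (QuotientGroup.mk' M')) :=
          (QuotientGroup.mk_surjective).prodMap (QuotientGroup.mk_surjective)
        have e1 : (G × G') ⧸ (M.prod M') ≃*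
            (G × G') ⧸ ((QuotientGroup.mk' M).prodMap (QuotientGroup.mk' M')).ker :=
          QuotientGroup.quotientMulEquivOfEq hker.symm
        have e2 : (G × G') ⧸ ((QuotientGroup.mk' M).prodMap (QuotientGroup.mk' M')).ker ≃*
            (G ⧸ M) × (G' ⧸ M') :=
          QuotientGroup.quotientKerEquivOfSurjective _ hsurj
        exact fhle_of_mulEquiv (e1.trans e2).symm (fhle_prod n hq hq')

theorem fhle_of_solvable : ∀ (n : ℕ) (G : Type) [Group G],
    derivedSeries G n = ⊥ → FittingHeightLe n G
  | 0, G, _, h => by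
      refine ⟨fun a b => ?_⟩
      have ha : a ∈ derivedSeries G 0 := Subgroup.mem_top a
      have hb : b ∈ derivedSeries G 0 := Subgroup.mem_top b
      rw [h, Subgroup.mem_bot] at ha hb
      rw [ha, hb]
  | (n+1), G, _, h => by
      set N := derivedSeries G n with hN
      haveI : N.Normal := derivedSeries_normal G n
      refine ⟨N, inferInstance, ?_, ?_⟩
      · have hcomm : ∀ a b : N, a * b = b * a := by
          intro a b
          have : ⁅(a : G), (b : G)⁆ ∈ derivedSeries G (n+1) :=
            Subgroup.commutator_mem_commutator a.2 b.2
          rw [h, Subgroup.mem_bot, commutatorElement_eq_one_iff_mul_comm] at this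
          exact Subtype.ext this
        letI : CommGroup N := { (inferInstance : Group N) with mul_comm := hcomm }
        infer_instance
      · refine fhle_of_solvable n (G ⧸ N) ?_
        have hmap : Subgroup.map (QuotientGroup.mk' N) (derivedSeries G n)
            = derivedSeries (G ⧸ N) n :=
          map_derivedSeries_eq QuotientGroup.mk_surjective n
        rw [← hmap, ← hN]
        exact (Subgroup.map_eq_bot_iff _).mpr (le_of_eq (QuotientGroup.ker_mk' N).symm)

/-- `SG G` is the intersection of all normal subgroups of `G` whose quotient has
Fitting height strictly smaller than that of `G`. -/
noncomputable def SG (G : Type) [Group G] : Subgroup G :=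
  sInf {K : Subgroup G | ∃ hK : K.Normal,
    (letI := hK; fittingHeight (G ⧸ K)) < fittingHeight G}


def SGset (G : Type) [Group G] : Set (Subgroup G) :=
  {K : Subgroup G | ∃ hK : K.Normal,
    (letI := hK; fittingHeight (G ⧸ K)) < fittingHeight G}

theorem SG_eq_sInf (G : Type) [Group G] : SG G = sInf (SGset G) := rfl

section FH

variable (G : Type) [Group G]

theorem fhle_fittingHeight [Group.IsSolvable G] : FittingHeightLe (fittingHeight G) G := by
  obtain ⟨n, hn⟩ := Group.IsSolvable.solvable (G := G)
  have hne : {n | FittingHeightLe n G}.Nonempty :=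
    ⟨n, show FittingHeightLe n G from fhle_of_solvable n G hn⟩
  exact Nat.sInf_mem hne

theorem fittingHeight_le {n : ℕ} (h : FittingHeightLe n G) : fittingHeight G ≤ n :=
  Nat.sInf_le (show n ∈ {n | FittingHeightLe n G} from h)

theorem fittingHeight_eq_of_mulEquiv {G G' : Type} [Group G] [Group G'] (e : G ≃* G') :
    fittingHeight G = fittingHeight G' := by
  unfold fittingHeight
  congr 1
  ext n
  exact ⟨fun h => fhle_of_mulEquiv e h, fun h => fhle_of_mulEquiv e.symm h⟩

theorem fittingHeight_quotient_le [Group.IsSolvable G] (N : Subgroup G) [N.Normal] :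
    fittingHeight (G ⧸ N) ≤ fittingHeight G :=
  fittingHeight_le _ (fhle_of_surjective _ (QuotientGroup.mk' N) QuotientGroup.mk_surjective
    (fhle_fittingHeight G))

theorem fittingHeight_pos [Group.IsSolvable G] [Nontrivial G] : 0 < fittingHeight G := by
  rcases Nat.eq_zero_or_pos (fittingHeight G) with h | h
  · have hfh := fhle_fittingHeight G
    rw [h] at hfh
    haveI : Subsingleton G := hfh
    obtain ⟨a, b, hab⟩ := exists_pair_ne G
    exact absurd (Subsingleton.elim a b) hab
  · exact h

theorem top_mem_SGset [Group.IsSolvable G] [Nontrivial G] : (⊤ : Subgroup G) ∈ SGset G := by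
  refine ⟨inferInstance, ?_⟩
  haveI : Subsingleton (G ⧸ (⊤ : Subgroup G)) := by
    refine ⟨fun a b => ?_⟩
    obtain ⟨x, rfl⟩ := QuotientGroup.mk_surjective a
    obtain ⟨y, rfl⟩ := QuotientGroup.mk_surjective b
    exact (QuotientGroup.eq).mpr (Subgroup.mem_top _)
  have h0 : fittingHeight (G ⧸ (⊤ : Subgroup G)) = 0 :=
    Nat.le_zero.mp (fittingHeight_le _
      (show FittingHeightLe 0 (G ⧸ (⊤ : Subgroup G)) from
        (inferInstance : Subsingleton (G ⧸ (⊤ : Subgroup G)))))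
  show fittingHeight (G ⧸ (⊤ : Subgroup G)) < fittingHeight G
  rw [h0]
  exact fittingHeight_pos G

set_option maxHeartbeats 1000000 in
theorem inf_mem_SGset [Finite G] [Group.IsSolvable G] {K1 K2 : Subgroup G}
    (h1 : K1 ∈ SGset G) (h2 : K2 ∈ SGset G) : K1 ⊓ K2 ∈ SGset G := by
  obtain ⟨n1, hlt1⟩ := h1
  obtain ⟨n2, hlt2⟩ := h2
  haveI := n1; haveI := n2
  refine ⟨inferInstance, ?_⟩
  have hker : ((QuotientGroup.mk' K1).prod (QuotientGroup.mk' K2)).ker = K1 ⊓ K2 := by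
    rw [MonoidHom.ker_prod, QuotientGroup.ker_mk', QuotientGroup.ker_mk']
  have e : G ⧸ (K1 ⊓ K2) ≃*
      G ⧸ ((QuotientGroup.mk' K1).prod (QuotientGroup.mk' K2)).ker :=
    QuotientGroup.quotientMulEquivOfEq hker.symm
  have hf : FittingHeightLe (max (fittingHeight (G ⧸ K1)) (fittingHeight (G ⧸ K2)))
      ((G ⧸ K1) × (G ⧸ K2)) :=
    fhle_prod _ (fhle_mono (le_max_left _ _) (fhle_fittingHeight _))
      (fhle_mono (le_max_right _ _) (fhle_fittingHeight _))
  have hfh : FittingHeightLe (max (fittingHeight (G ⧸ K1)) (fittingHeight (G ⧸ K2)))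
      (G ⧸ (K1 ⊓ K2)) :=
    fhle_of_injective _
      ((QuotientGroup.kerLift ((QuotientGroup.mk' K1).prod (QuotientGroup.mk' K2))).comp
        e.toMonoidHom)
      ((QuotientGroup.kerLift_injective _).comp e.injective) hf
  calc fittingHeight (G ⧸ (K1 ⊓ K2))
      ≤ max (fittingHeight (G ⧸ K1)) (fittingHeight (G ⧸ K2)) := fittingHeight_le _ hfh
    _ < fittingHeight G := max_lt hlt1 hlt2

theorem SG_mem [Finite G] [Group.IsSolvable G] [Nontrivial G] : SG G ∈ SGset G := by
  obtain ⟨K0, hK0, hmin⟩ := (IsWellFounded.wf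
    (r := ((· < ·) : Subgroup G → Subgroup G → Prop))).has_min (SGset G)
    ⟨⊤, top_mem_SGset G⟩
  have hle : ∀ K ∈ SGset G, K0 ≤ K := by
    intro K hK
    have hmem := inf_mem_SGset G hK0 hK
    rcases eq_or_lt_of_le (inf_le_left : K0 ⊓ K ≤ K0) with heq | hlt
    · exact heq ▸ inf_le_right
    · exact absurd hlt (hmin _ hmem)
  have hSG : SG G = K0 := le_antisymm (sInf_le hK0) (le_sInf hle)
  rw [hSG]
  exact hK0

theorem SG_normal [Finite G] [Group.IsSolvable G] [Nontrivial G] : (SG G).Normal :=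
  (SG_mem G).choose

theorem SG_lt [Finite G] [Group.IsSolvable G] [Nontrivial G] :
    letI := SG_normal G
    fittingHeight (G ⧸ SG G) < fittingHeight G :=
  (SG_mem G).choose_spec

theorem quotient_lt_of_SG_le [Finite G] [Group.IsSolvable G] [Nontrivial G]
    {K : Subgroup G} [K.Normal] (h : SG G ≤ K) :
    fittingHeight (G ⧸ K) < fittingHeight G := by
  haveI := SG_normal G
  have hcomap : SG G ≤ K.comap (MonoidHom.id G) := by rwa [Subgroup.comap_id]
  have hsurj : Function.Surjective (QuotientGroup.map (SG G) K (MonoidHom.id G) hcomap) := by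
    intro y
    obtain ⟨x, rfl⟩ := QuotientGroup.mk_surjective y
    exact ⟨QuotientGroup.mk x, rfl⟩
  calc fittingHeight (G ⧸ K)
      ≤ fittingHeight (G ⧸ SG G) :=
        fittingHeight_le _ (fhle_of_surjective _ _ hsurj (fhle_fittingHeight _))
    _ < fittingHeight G := SG_lt G

theorem SG_ne_bot [Finite G] [Group.IsSolvable G] [Nontrivial G] : SG G ≠ ⊥ := by
  intro hbot
  haveI := SG_normal G
  have hlt := SG_lt G
  have heqfh : fittingHeight (G ⧸ SG G) = fittingHeight G :=
    fittingHeight_eq_of_mulEquiv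
      ((QuotientGroup.quotientMulEquivOfEq hbot).trans QuotientGroup.quotientBot)
  exact lt_irrefl _ (heqfh ▸ hlt)

end FH

/-- The Fitting subgroup: the join of all nilpotent normal subgroups. -/
def FittingSub (G : Type) [Group G] : Subgroup G :=
  ⨆ (N : Subgroup G) (_ : N.Normal) (_ : Group.IsNilpotent N), N

theorem statement_3 (G : Type) [Group G] [Finite G] (hsol : IsSolvable G)
    (N : Subgroup G) [N.Normal] [Nontrivial (G ⧸ N)] :
    (((SG G).map (QuotientGroup.mk' N) ≠ ⊥) ↔
      fittingHeight (G ⧸ N) = fittingHeight G) ∧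
    ((fittingHeight (G ⧸ N) = fittingHeight G) ↔
      SG (G ⧸ N) = (SG G).map (QuotientGroup.mk' N)) := by
  haveI : Group.IsSolvable G := hsol
  haveI : Nontrivial G := by
    obtain ⟨a, b, hab⟩ := exists_pair_ne (G ⧸ N)
    obtain ⟨x, rfl⟩ := QuotientGroup.mk_surjective a
    obtain ⟨y, rfl⟩ := QuotientGroup.mk_surjective b
    exact ⟨x, y, fun hxy => hab (by rw [hxy])⟩
  haveI hSGn : (SG G).Normal := SG_normal G
  set π := QuotientGroup.mk' N with hπ
  have hq_le : fittingHeight (G ⧸ N) ≤ fittingHeight G := fittingHeight_quotient_le G N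
  have key1 : (SG G).map π = ⊥ ↔ SG G ≤ N := by
    rw [Subgroup.map_eq_bot_iff, QuotientGroup.ker_mk']
  have lem12 : ((SG G).map π ≠ ⊥) ↔ fittingHeight (G ⧸ N) = fittingHeight G := by
    constructor
    · intro hne
      by_contra hA
      have hlt : fittingHeight (G ⧸ N) < fittingHeight G := lt_of_le_of_ne hq_le hA
      have hmemN : N ∈ SGset G := ⟨inferInstance, hlt⟩
      exact hne (key1.mpr (sInf_le hmemN))
    · intro hA hbot
      exact absurd hA (ne_of_lt (quotient_lt_of_SG_le G (key1.mp hbot)))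
  refine ⟨lem12, ?_, ?_⟩
  · -- (ii) → (iii)
    intro hA
    haveI : ((SG G).map π).Normal := hSGn.map π QuotientGroup.mk_surjective
    have hmem : (SG G).map π ∈ SGset (G ⧸ N) := by
      refine ⟨inferInstance, ?_⟩
      have hsurj : Function.Surjective (QuotientGroup.map (SG G) ((SG G).map π) π
          (fun x hx => Subgroup.mem_comap.mpr ⟨x, hx, rfl⟩)) := by
        intro y
        obtain ⟨z, rfl⟩ := QuotientGroup.mk_surjective y
        obtain ⟨x, rfl⟩ := QuotientGroup.mk_surjective z
        exact ⟨QuotientGroup.mk x, rfl⟩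
      show fittingHeight ((G ⧸ N) ⧸ (SG G).map π) < fittingHeight (G ⧸ N)
      calc fittingHeight ((G ⧸ N) ⧸ (SG G).map π)
          ≤ fittingHeight (G ⧸ SG G) :=
            fittingHeight_le _ (fhle_of_surjective _ _ hsurj (fhle_fittingHeight _))
        _ < fittingHeight G := SG_lt G
        _ = fittingHeight (G ⧸ N) := hA.symm
    have h1 : SG (G ⧸ N) ≤ (SG G).map π := sInf_le hmem
    have h2 : (SG G).map π ≤ SG (G ⧸ N) := by
      refine le_sInf ?_
      intro K hK
      obtain ⟨hKn, hKlt⟩ := hK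
      haveI := hKn
      haveI : (K.comap π).Normal := hKn.comap π
      have hker : ((QuotientGroup.mk' K).comp π).ker = K.comap π := by
        rw [← MonoidHom.comap_ker, QuotientGroup.ker_mk']
      have hsurj : Function.Surjective ((QuotientGroup.mk' K).comp π) :=
        QuotientGroup.mk_surjective.comp QuotientGroup.mk_surjective
      have e : G ⧸ K.comap π ≃* (G ⧸ N) ⧸ K :=
        (QuotientGroup.quotientMulEquivOfEq hker.symm).trans
          (QuotientGroup.quotientKerEquivOfSurjective _ hsurj)
      have hlt : fittingHeight (G ⧸ K.comap π) < fittingHeight G := by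
        rw [fittingHeight_eq_of_mulEquiv e, ← hA]
        exact hKlt
      have hSGle : SG G ≤ K.comap π := sInf_le ⟨inferInstance, hlt⟩
      exact Subgroup.map_le_iff_le_comap.mpr hSGle
    exact le_antisymm h1 h2
  · -- (iii) → (ii)
    intro heq
    exact lem12.mp (fun hbot => SG_ne_bot (G ⧸ N) (heq.trans hbot))
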